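/- Let s : T → ℝ and α ∈ ℝ, and define α(D, i_D) = Σ_{F∈𝒟, F⊇D} Σ_{j_F∈I_F* : (j_F)_D = i_D} (−1)^{|F∖D|} s(F, j_F) for (D, i_D) ∈ T, and α_∅ = α + Σ_{(D,i_D)∈T} (−1)^{|D|} s(D, i_D). Then the induced hyperparameters sum to the total: α_∅ + Σ_{(D,i_D)∈T} α(D, i_D) = α. -/

import Mathlib

open Finset MeasureTheory

/-- The cell equal to `i` on `F` and to the baseline `b` off `F`. -/
def cellOn {V : Type} [DecidableEq V] {I : V → Type} (b : ∀ γ, I γ)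
    (F : Finset V) (i : ∀ γ, I γ) : ∀ γ, I γ :=
  fun γ => if γ ∈ F then i γ else b γ

/-- The support of a cell: the set of coordinates that are off baseline. -/
def cellSupport {V : Type} [Fintype V] [DecidableEq V] {I : V → Type}
    [∀ γ, DecidableEq (I γ)] (b : ∀ γ, I γ) (j : ∀ γ, I γ) : Finset V :=
  Finset.univ.filter (fun γ => j γ ≠ b γ)

/-- A generating class: a nonempty collection of nonempty subsets of `V` closed
under nonempty subsets. -/
def IsGenClass {V : Type} [DecidableEq V] (𝒟 : Finset (Finset V)) : Prop :=
  𝒟.Nonempty ∧ (∀ D ∈ 𝒟, D ≠ ∅) ∧ ∀ D ∈ 𝒟, ∀ F ⊆ D, F ≠ ∅ → F ∈ 𝒟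

/-- The index set `T = {(D, i_D) : D ∈ 𝒟, i_D ∈ I_D*}`; a tuple `i_D ∈ I_D*` is
represented by the unique cell whose support is exactly `D`. -/
def TParam {V : Type} [Fintype V] [DecidableEq V] (I : V → Type)
    [∀ γ, DecidableEq (I γ)] (b : ∀ γ, I γ) (𝒟 : Finset (Finset V)) : Type :=
  {x : Finset V × (∀ γ, I γ) // x.1 ∈ 𝒟 ∧ cellSupport b x.2 = x.1}

noncomputable instance {V : Type} [Fintype V] [DecidableEq V] (I : V → Type)
    [∀ γ, Fintype (I γ)] [∀ γ, DecidableEq (I γ)] (b : ∀ γ, I γ)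
    (𝒟 : Finset (Finset V)) : Fintype (TParam I b 𝒟) := by
  unfold TParam; infer_instance

instance {V : Type} [Fintype V] [DecidableEq V] (I : V → Type)
    [∀ γ, DecidableEq (I γ)] (b : ∀ γ, I γ)
    (𝒟 : Finset (Finset V)) : DecidableEq (TParam I b 𝒟) := by
  unfold TParam; infer_instance

/-- The exponent `Σ_{F ∈ 𝒟, F ⊆ S(j)} θ(F, j_F)` of the hierarchical model. -/
noncomputable def energy {V : Type} [Fintype V] [DecidableEq V] {I : V → Type}
    [∀ γ, Fintype (I γ)] [∀ γ, DecidableEq (I γ)] (b : ∀ γ, I γ)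
    (𝒟 : Finset (Finset V)) (θ : TParam I b 𝒟 → ℝ) (j : ∀ γ, I γ) : ℝ :=
  ∑ t : TParam I b 𝒟, if t.1.2 = cellOn b t.1.1 j then θ t else 0

/-- The partition function `Z(θ)`. -/
noncomputable def Zfun {V : Type} [Fintype V] [DecidableEq V] {I : V → Type}
    [∀ γ, Fintype (I γ)] [∀ γ, DecidableEq (I γ)] (b : ∀ γ, I γ)
    (𝒟 : Finset (Finset V)) (θ : TParam I b 𝒟 → ℝ) : ℝ :=
  ∑ j : (∀ γ, I γ), Real.exp (energy b 𝒟 θ j)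

/-- The log-partition function `k(θ) = log Z(θ)`. -/
noncomputable def kfun {V : Type} [Fintype V] [DecidableEq V] {I : V → Type}
    [∀ γ, Fintype (I γ)] [∀ γ, DecidableEq (I γ)] (b : ∀ γ, I γ)
    (𝒟 : Finset (Finset V)) (θ : TParam I b 𝒟 → ℝ) : ℝ :=
  Real.log (Zfun b 𝒟 θ)

/-- The hierarchical log-linear probability function `p_θ`. -/
noncomputable def phier {V : Type} [Fintype V] [DecidableEq V] {I : V → Type}
    [∀ γ, Fintype (I γ)] [∀ γ, DecidableEq (I γ)] (b : ∀ γ, I γ)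
    (𝒟 : Finset (Finset V)) (θ : TParam I b 𝒟 → ℝ) (j : ∀ γ, I γ) : ℝ :=
  Real.exp (energy b 𝒟 θ j) / Zfun b 𝒟 θ

/-- The induced hyperparameters sum to the total: `α_∅ + Σ_{(D,i_D)∈T} α(D,i_D) = α`,
where `α(D,i_D) = Σ_{F∈𝒟,F⊇D} Σ_{j_F∈I_F*:(j_F)_D=i_D} (−1)^{|F∖D|} s(F,j_F)` and
`α_∅ = α + Σ_{(D,i_D)∈T} (−1)^{|D|} s(D,i_D)`. -/
lemma aux_powerset_sum {V : Type} [DecidableEq V] (F : Finset V) (hF : F.Nonempty) :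
    ∑ D ∈ F.powerset, (-1 : ℝ) ^ (F \ D).card = 0 := by
  have h1 : ∑ D ∈ F.powerset, (-1 : ℝ) ^ (F \ D).card
      = ∑ D ∈ F.powerset, (-1 : ℝ) ^ D.card := by
    apply Finset.sum_nbij' (fun D => F \ D) (fun D => F \ D)
    · intro a ha; simp_all [Finset.mem_powerset]
    · intro a ha; simp_all [Finset.mem_powerset]
    · intro a ha
      simp only [Finset.mem_powerset] at ha
      exact Finset.sdiff_sdiff_eq_self ha
    · intro a ha
      simp only [Finset.mem_powerset] at ha
      exact Finset.sdiff_sdiff_eq_self ha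
    · intro a ha; rfl
  rw [h1]
  have h0 := Finset.sum_powerset_neg_one_pow_card_of_nonempty (x := F) hF
  have h2 : ((∑ m ∈ F.powerset, (-1 : ℤ) ^ m.card : ℤ) : ℝ) = 0 := by rw [h0]; norm_num
  push_cast at h2
  exact h2

theorem hyperparams_sum_to_total {V : Type} [Fintype V] [DecidableEq V]
    {I : V → Type} [∀ γ, Fintype (I γ)] [∀ γ, DecidableEq (I γ)]
    (b : ∀ γ, I γ) (𝒟 : Finset (Finset V)) (h𝒟 : IsGenClass 𝒟)
    (s : TParam I b 𝒟 → ℝ) (α : ℝ) :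
    (α + ∑ t : TParam I b 𝒟, (-1 : ℝ) ^ t.1.1.card * s t) +
      ∑ t : TParam I b 𝒟,
        (∑ t' ∈ Finset.univ.filter
            (fun t' : TParam I b 𝒟 =>
              t.1.1 ⊆ t'.1.1 ∧ ∀ γ ∈ t.1.1, t'.1.2 γ = t.1.2 γ),
          (-1 : ℝ) ^ (t'.1.1 \ t.1.1).card * s t') = α := by
  obtain ⟨-, hne, hsub⟩ := h𝒟
  -- key pointwise sum
  have key : ∀ t' : TParam I b 𝒟,
      ∑ t ∈ Finset.univ.filter (fun t : TParam I b 𝒟 =>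
          t.1.1 ⊆ t'.1.1 ∧ ∀ γ ∈ t.1.1, t'.1.2 γ = t.1.2 γ),
        (-1 : ℝ) ^ (t'.1.1 \ t.1.1).card = -(-1 : ℝ) ^ t'.1.1.card := by
    rintro ⟨⟨F, jF⟩, hF, hsupp⟩
    have hFne : F.Nonempty := Finset.nonempty_iff_ne_empty.2 (hne F hF)
    have hstep : ∑ t ∈ Finset.univ.filter (fun t : TParam I b 𝒟 =>
          t.1.1 ⊆ F ∧ ∀ γ ∈ t.1.1, jF γ = t.1.2 γ),
        (-1 : ℝ) ^ (F \ t.1.1).card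
        = ∑ D ∈ F.powerset.filter (fun D => D ≠ ∅), (-1 : ℝ) ^ (F \ D).card := by
      refine Finset.sum_bij' (i := fun t _ => t.1.1)
        (j := fun D hD => (⟨(D, cellOn b D jF), by
          simp only [Finset.mem_filter, Finset.mem_powerset] at hD
          refine ⟨hsub F hF D hD.1 hD.2, ?_⟩
          ext γ
          simp only [cellSupport, cellOn, Finset.mem_filter, Finset.mem_univ, true_and]
          by_cases h : γ ∈ D
          · have hγF : γ ∈ cellSupport b jF := hsupp ▸ hD.1 h
            simp only [cellSupport, Finset.mem_filter, Finset.mem_univ, true_and] at hγF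
            simp [h, hγF]
          · simp [h]⟩ : TParam I b 𝒟)) ?_ ?_ ?_ ?_ ?_
      · intro t ht
        simp only [Finset.mem_filter, Finset.mem_univ, true_and] at ht
        simp only [Finset.mem_filter, Finset.mem_powerset]
        exact ⟨ht.1, hne _ t.2.1⟩
      · intro D hD
        simp only [Finset.mem_filter, Finset.mem_powerset] at hD
        refine Finset.mem_filter.2 ⟨Finset.mem_univ _, ?_⟩
        show D ⊆ F ∧ ∀ γ ∈ D, jF γ = cellOn b D jF γ
        refine ⟨hD.1, ?_⟩
        intro γ hγ
        simp [cellOn, hγ]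
      · intro t ht
        simp only [Finset.mem_filter, Finset.mem_univ, true_and] at ht
        apply Subtype.ext
        have hsup := t.2.2
        refine Prod.ext rfl ?_
        funext γ
        simp only [cellOn]
        by_cases h : γ ∈ t.1.1
        · simp [h, (ht.2 γ h).symm]
        · have : t.1.2 γ = b γ := by
            by_contra hc
            exact h (hsup ▸ (by simp [cellSupport, hc] : γ ∈ cellSupport b t.1.2))
          simp [h, this]
      · intro D hD; rfl
      · intro t ht; rfl
    rw [hstep]
    have hsplit : F.powerset = insert ∅ (F.powerset.filter (fun D => D ≠ ∅)) := by
      ext D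
      simp only [Finset.mem_insert, Finset.mem_filter, Finset.mem_powerset]
      constructor
      · intro h; by_cases hd : D = ∅ <;> simp_all
      · rintro (rfl | h) <;> simp_all
    have h0 := aux_powerset_sum F hFne
    rw [hsplit, Finset.sum_insert (by simp)] at h0
    simp only [Finset.sdiff_empty] at h0
    linarith
  -- swap the double sum
  have hswap : ∑ t : TParam I b 𝒟,
      (∑ t' ∈ Finset.univ.filter
          (fun t' : TParam I b 𝒟 =>
            t.1.1 ⊆ t'.1.1 ∧ ∀ γ ∈ t.1.1, t'.1.2 γ = t.1.2 γ),
        (-1 : ℝ) ^ (t'.1.1 \ t.1.1).card * s t')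
      = ∑ t' : TParam I b 𝒟,
        (∑ t ∈ Finset.univ.filter (fun t : TParam I b 𝒟 =>
            t.1.1 ⊆ t'.1.1 ∧ ∀ γ ∈ t.1.1, t'.1.2 γ = t.1.2 γ),
          (-1 : ℝ) ^ (t'.1.1 \ t.1.1).card) * s t' := by
    simp_rw [Finset.sum_filter, Finset.sum_mul, ite_mul, zero_mul]
    exact Finset.sum_comm
  rw [hswap]
  have h3 : ∑ t' : TParam I b 𝒟,
      (∑ t ∈ Finset.univ.filter (fun t : TParam I b 𝒟 =>
          t.1.1 ⊆ t'.1.1 ∧ ∀ γ ∈ t.1.1, t'.1.2 γ = t.1.2 γ),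
        (-1 : ℝ) ^ (t'.1.1 \ t.1.1).card) * s t'
      = -∑ t : TParam I b 𝒟, (-1 : ℝ) ^ t.1.1.card * s t := by
    rw [← Finset.sum_neg_distrib]
    refine Finset.sum_congr rfl fun t' _ => ?_
    rw [key t']; ring
  rw [h3]; ring
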